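/- Let n ≥ 2 and P a monic hyperbolic polynomial of degree n. For ε ≠ 0, the polynomial (1 − εD)^{n−1}P (where D = d/dx) is a monic strictly hyperbolic polynomial of degree n; in particular, every monic hyperbolic polynomial is a locally uniform limit of monic strictly hyperbolic polynomials of the same degree. -/

import Mathlib

open Polynomial Finset

section Aux
open Filter


lemma rolle_atTop {f f' : ℝ → ℝ} (hd : ∀ x, HasDerivAt f (f' x) x) (a : ℝ)
    (hfa : f a = 0) (h0 : Tendsto f atTop (nhds 0))
    (hne : f (a+1) ≠ 0) : ∃ c, a < c ∧ f' c = 0 := by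
  set σ : ℝ := if 0 < f (a+1) then 1 else -1 with hσ
  have hσ0 : σ ≠ 0 := by rcases ite_eq_or_eq (0 < f (a+1)) (1:ℝ) (-1) with h | h <;>
    rw [hσ, h] <;> norm_num
  set g : ℝ → ℝ := fun x => σ * f x with hg
  have hgd : ∀ x, HasDerivAt g (σ * f' x) x := fun x => (hd x).const_mul σ
  have hg1 : 0 < g (a + 1) := by
    rcases lt_or_gt_of_ne hne with h | h
    · simp only [hg, hσ, if_neg (not_lt.mpr h.le)]; linarith
    · simp only [hg, hσ, if_pos h]; linarith
  have hg0 : Tendsto g atTop (nhds 0) := by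
    have := h0.const_mul σ; simpa using this
  have hev : ∀ᶠ x in atTop, g x < g (a + 1) := hg0.eventually (gt_mem_nhds hg1)
  obtain ⟨X, hX1, hX2⟩ := (hev.and (eventually_ge_atTop (a + 1))).exists
  have haX : a < X := lt_of_lt_of_le (by linarith) hX2
  have hcont : Continuous g := by
    apply continuous_iff_continuousAt.mpr
    exact fun x => (hgd x).differentiableAt.continuousAt
  obtain ⟨m, hm, hmax⟩ := isCompact_Icc.exists_isMaxOn (Set.nonempty_Icc.mpr haX.le)
    hcont.continuousOn
  have hga : g a = 0 := by simp [hg, hfa]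
  have hmem : (a + 1) ∈ Set.Icc a X := ⟨by linarith, hX2⟩
  have hgm : g (a + 1) ≤ g m := hmax hmem
  have hma : a < m := by
    rcases lt_or_eq_of_le hm.1 with h | h
    · exact h
    · exfalso; rw [← h] at hgm; rw [hga] at hgm; linarith
  have hmX : m < X := by
    rcases lt_or_eq_of_le hm.2 with h | h
    · exact h
    · exfalso; rw [h] at hgm; linarith
  have hloc : IsLocalMax g m := hmax.isLocalMax (Icc_mem_nhds hma hmX)
  have := hloc.hasDerivAt_eq_zero (hgd m)
  refine ⟨m, hma, ?_⟩
  rcases mul_eq_zero.mp this with h | h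
  · exact absurd h hσ0
  · exact h

lemma exp_deriv (ε : ℝ) (p : ℝ[X]) (x : ℝ) :
    HasDerivAt (fun x => Real.exp (-x/ε) * p.eval x)
      (Real.exp (-x/ε) * (-(1/ε) * p.eval x + (derivative p).eval x)) x := by
  have h1 : HasDerivAt (fun x : ℝ => Real.exp (-x/ε)) (Real.exp (-x/ε) * (-(1/ε))) x := by
    have h : HasDerivAt (fun x : ℝ => -x/ε) (-(1/ε)) x := by
      have := ((hasDerivAt_id x).neg.div_const ε)
      refine this.congr_deriv ?_
      ring
    exact (Real.hasDerivAt_exp _).comp x h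
  have := h1.mul (p.hasDerivAt x)
  refine this.congr_deriv ?_; ring

lemma deriv_zero_root (ε : ℝ) (hε : ε ≠ 0) (p : ℝ[X]) (x : ℝ)
    (h : Real.exp (-x/ε) * (-(1/ε) * p.eval x + (derivative p).eval x) = 0) :
    (p - C ε * derivative p).eval x = 0 := by
  have he := Real.exp_ne_zero (-x/ε)
  rcases mul_eq_zero.mp h with h1 | h1
  · exact absurd h1 he
  · simp only [eval_sub, eval_mul, eval_C]
    have h2 : (derivative p).eval x = 1/ε * p.eval x := by linarith
    rw [h2]; field_simp; ring

lemma rolle_between (ε : ℝ) (hε : ε ≠ 0) (p : ℝ[X]) {a b : ℝ} (hab : a < b)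
    (ha : p.IsRoot a) (hb : p.IsRoot b) :
    ∃ c, a < c ∧ c < b ∧ (p - C ε * derivative p).eval c = 0 := by
  have hcont : Continuous (fun x => Real.exp (-x/ε) * p.eval x) :=
    continuous_iff_continuousAt.mpr fun x => (exp_deriv ε p x).differentiableAt.continuousAt
  obtain ⟨c, hc, hc0⟩ := exists_hasDerivAt_eq_zero hab hcont.continuousOn
    (by simp [ha.eq_zero, hb.eq_zero]) (fun x _ => exp_deriv ε p x)
  exact ⟨c, hc.1, hc.2, deriv_zero_root ε hε p c hc0⟩

lemma tendsto_exp_mul_top (ε : ℝ) (hε : 0 < ε) (p : ℝ[X]) :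
    Tendsto (fun x => Real.exp (-x/ε) * p.eval x) atTop (nhds 0) := by
  have key : ∀ x : ℝ, Real.exp (-x/ε) * p.eval x
      = (p.comp (C ε * X)).eval (x/ε) / Real.exp (x/ε) := by
    intro x
    rw [eval_comp, eval_mul, eval_C, eval_X, mul_div_cancel₀ _ hε.ne', neg_div,
      Real.exp_neg, mul_comm]
    exact (div_eq_mul_inv _ _).symm
  simp_rw [key]
  exact (Polynomial.tendsto_div_exp_atTop _).comp (Tendsto.atTop_div_const hε tendsto_id)

lemma tendsto_exp_mul_bot (ε : ℝ) (hε : ε < 0) (p : ℝ[X]) :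
    Tendsto (fun x => Real.exp (-x/ε) * p.eval x) atBot (nhds 0) := by
  have key : ∀ x : ℝ, Real.exp (-x/ε) * p.eval x
      = (p.comp (C ε * X)).eval (x/ε) / Real.exp (x/ε) := by
    intro x
    rw [eval_comp, eval_mul, eval_C, eval_X, mul_div_cancel₀ _ hε.ne, neg_div,
      Real.exp_neg, mul_comm]
    exact (div_eq_mul_inv _ _).symm
  simp_rw [key]
  refine (Polynomial.tendsto_div_exp_atTop _).comp ?_
  rw [tendsto_atTop]
  intro b
  filter_upwards [eventually_le_atBot (b * ε)] with x hx
  exact (le_div_iff_of_neg hε).mpr hx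

lemma rolle_right (ε : ℝ) (hε : 0 < ε) (p : ℝ[X]) {a : ℝ}
    (ha : p.IsRoot a) (hmax : ∀ b, p.IsRoot b → b ≤ a) :
    ∃ c, a < c ∧ (p - C ε * derivative p).eval c = 0 := by
  obtain ⟨c, hc1, hc2⟩ := rolle_atTop (fun x => exp_deriv ε p x) a
    (by simp [ha.eq_zero]) (tendsto_exp_mul_top ε hε p)
    (by
      intro hcon
      rcases mul_eq_zero.mp hcon with h | h
      · exact Real.exp_ne_zero _ h
      · have := hmax (a+1) h; linarith)
  exact ⟨c, hc1, deriv_zero_root ε hε.ne' p c hc2⟩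

lemma rolle_left (ε : ℝ) (hε : ε < 0) (p : ℝ[X]) {a : ℝ}
    (ha : p.IsRoot a) (hmin : ∀ b, p.IsRoot b → a ≤ b) :
    ∃ c, c < a ∧ (p - C ε * derivative p).eval c = 0 := by
  have hd : ∀ x : ℝ, HasDerivAt (fun y : ℝ => Real.exp (-(-y)/ε) * p.eval (-y))
      (-(Real.exp (-(-x)/ε) * (-(1/ε) * p.eval (-x) + (derivative p).eval (-x)))) x := by
    intro x
    have h0 := (exp_deriv ε p (-x)).comp x (hasDerivAt_neg x)
    have he : (fun y : ℝ => Real.exp (-(-y)/ε) * p.eval (-y))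
        = ((fun x => Real.exp (-x/ε) * p.eval x) ∘ Neg.neg) := rfl
    rw [he]
    refine h0.congr_deriv ?_
    ring
  have htend : Tendsto (fun y : ℝ => Real.exp (-(-y)/ε) * p.eval (-y)) atTop (nhds 0) :=
    (tendsto_exp_mul_bot ε hε p).comp tendsto_neg_atTop_atBot
  have hne : Real.exp (-(-(-a+1))/ε) * p.eval (-(-a+1)) ≠ 0 := by
    intro hcon
    rcases mul_eq_zero.mp hcon with h | h
    · exact Real.exp_ne_zero _ h
    · have := hmin (-(-a+1)) h; linarith
  obtain ⟨c, hc1, hc2⟩ := rolle_atTop hd (-a) (by simp [ha.eq_zero]) htend hne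
  refine ⟨-c, by linarith, deriv_zero_root ε hε.ne p (-c) ?_⟩
  rw [neg_eq_zero] at hc2; exact hc2

lemma q_monic (ε : ℝ) (p : ℝ[X]) (hm : p.Monic) :
    (p - C ε * derivative p).Monic ∧ (p - C ε * derivative p).natDegree = p.natDegree := by
  have hlt : degree (-(C ε * derivative p)) < degree p := by
    rw [degree_neg]
    calc degree (C ε * derivative p) ≤ degree (C ε) + degree (derivative p) :=
          degree_mul_le _ _
      _ ≤ 0 + degree (derivative p) := by gcongr; exact degree_C_le
      _ = degree (derivative p) := by rw [zero_add]
      _ < degree p := degree_derivative_lt (hm.ne_zero)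
  constructor
  · have := hm.add_of_left hlt
    simpa [sub_eq_add_neg] using this
  · have := natDegree_eq_of_degree_eq (degree_add_eq_left_of_degree_lt hlt)
    simpa [sub_eq_add_neg] using this

lemma mult_drop (ε : ℝ) (hε : ε ≠ 0) (p : ℝ[X]) (hp : p ≠ 0) (a : ℝ)
    (hq0 : p - C ε * derivative p ≠ 0)
    (hroot : 1 ≤ p.rootMultiplicity a) :
    (p - C ε * derivative p).rootMultiplicity a = p.rootMultiplicity a - 1 := by
  set m := p.rootMultiplicity a with hm
  set g := p /ₘ (X - C a) ^ m with hg
  have hfac : (X - C a) ^ m * g = p := pow_mul_divByMonic_rootMultiplicity_eq p a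
  have hga : g.eval a ≠ 0 := eval_divByMonic_pow_rootMultiplicity_ne_zero a hp
  set h : ℝ[X] := (X - C a) * g - C ε * ((C (m:ℝ)) * g + (X - C a) * derivative g) with hh
  have hXa : (X - C a : ℝ[X]) ≠ 0 := X_sub_C_ne_zero a
  have hms : (X - C a : ℝ[X]) ^ (m-1) * (X - C a) = (X - C a) ^ m := by
    rw [← pow_succ]; congr 1; omega
  have key : p - C ε * derivative p = (X - C a) ^ (m - 1) * h := by
    apply mul_left_cancel₀ hXa
    have hdp : derivative p
        = C (m:ℝ) * (X - C a)^(m-1) * g + (X - C a)^m * derivative g := by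
      rw [← hfac, derivative_mul, derivative_pow, derivative_sub, derivative_X, derivative_C,
        sub_zero, mul_one]
    rw [hdp, ← hfac, hh, ← hms]
    ring
  have hha : h.eval a ≠ 0 := by
    simp only [hh, eval_sub, eval_mul, eval_add, eval_pow, eval_C, eval_X, sub_self, zero_mul,
      zero_sub, neg_ne_zero, mul_zero, add_zero]
    intro hcon
    rcases mul_eq_zero.mp hcon with h1 | h1
    · exact hε h1
    · rcases mul_eq_zero.mp h1 with h2 | h2
      · exact (Nat.cast_ne_zero.mpr (by omega) : (m:ℝ) ≠ 0) h2
      · exact hga h2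
  rw [key] at hq0 ⊢
  rw [rootMultiplicity_mul hq0, rootMultiplicity_X_sub_C_pow,
    rootMultiplicity_eq_zero (fun hc => hha hc), add_zero]
lemma step_lemma (ε : ℝ) (hε : ε ≠ 0) (p : ℝ[X]) (hm : p.Monic)
    (hd : 1 ≤ p.natDegree) (hr : Multiset.card p.roots = p.natDegree) :
    (p - C ε * derivative p).Monic ∧ (p - C ε * derivative p).natDegree = p.natDegree ∧
    Multiset.card (p - C ε * derivative p).roots = p.natDegree ∧
    ∀ a, (p - C ε * derivative p).rootMultiplicity a ≤ max 1 (p.rootMultiplicity a - 1) := by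
  classical
  obtain ⟨hqm, hqd⟩ := q_monic ε p hm
  set q := p - C ε * derivative p with hqdef
  have hp0 : p ≠ 0 := hm.ne_zero
  have hq0 : q ≠ 0 := hqm.ne_zero
  set n := p.natDegree with hn
  set s := p.roots.toFinset with hs
  set l := s.sort (· ≤ ·) with hl
  have hlen : l.length = s.card := Finset.length_sort _
  set r := s.card with hrr
  have hsort : l.SortedLT := Finset.sortedLT_sort s
  have hmem_l : ∀ a ∈ l, p.IsRoot a := fun a ha =>
    isRoot_of_mem_roots (Multiset.mem_toFinset.mp ((Finset.mem_sort (α := ℝ) (· ≤ ·)).mp ha))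
  have hmem_s : ∀ a ∈ l, a ∈ s := fun a ha => (Finset.mem_sort (α := ℝ) (· ≤ ·)).mp ha
  have hrn : r ≤ n := by
    rw [hrr, hs, ← hr]
    exact Multiset.toFinset_card_le _
  have hr1 : 1 ≤ r := by
    rw [hrr]
    refine Finset.card_pos.mpr ?_
    have : p.roots ≠ 0 := by
      intro h0
      rw [h0] at hr; simp at hr; omega
    obtain ⟨a, ha⟩ := Multiset.exists_mem_of_ne_zero this
    exact ⟨a, Multiset.mem_toFinset.mpr ha⟩
  have hsne : s.Nonempty := Finset.card_pos.mp (by omega)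
  -- no member of s strictly between adjacent sorted entries
  have hbetween : ∀ (i : ℕ) (h1 : i + 1 < l.length) (b : ℝ), b ∈ s →
      ¬(l.get ⟨i, by omega⟩ < b ∧ b < l.get ⟨i+1, h1⟩) := by
    rintro i h1 b hb ⟨hb1, hb2⟩
    obtain ⟨j, hj⟩ := List.mem_iff_get.mp ((Finset.mem_sort (α := ℝ) (· ≤ ·)).mpr hb)
    have hmono := hsort.strictMono_get.monotone
    rcases le_or_gt j.1 i with h | h
    · have : l.get j ≤ l.get ⟨i, by omega⟩ := hmono (Fin.le_def.mpr (by simp; omega))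
      rw [hj] at this; linarith
    · have : l.get ⟨i+1, h1⟩ ≤ l.get j := hmono (Fin.le_def.mpr (by simp; omega))
      rw [hj] at this; linarith
  have hil : ∀ i : Fin (r - 1), i.1 + 1 < l.length := fun i => by rw [hlen]; omega
  have hil0 : ∀ i : Fin (r - 1), i.1 < l.length := fun i => by rw [hlen]; omega
  have hex : ∀ i : Fin (r - 1), ∃ cc : ℝ,
      l.get ⟨i.1, hil0 i⟩ < cc ∧ cc < l.get ⟨i.1 + 1, hil i⟩ ∧ q.eval cc = 0 := by
    intro i
    have hab : l.get ⟨i.1, hil0 i⟩ < l.get ⟨i.1 + 1, hil i⟩ :=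
      hsort.strictMono_get (Fin.lt_def.mpr (by simp))
    obtain ⟨cc, h1, h2, h3⟩ := rolle_between ε hε p hab
      (hmem_l _ (l.get_mem _)) (hmem_l _ (l.get_mem _))
    exact ⟨cc, h1, h2, h3⟩
  choose c hcl hcr hcq using hex
  have hc_ns : ∀ i : Fin (r - 1), c i ∉ s := fun i hmem =>
    hbetween i.1 (hil i) (c i) hmem ⟨hcl i, hcr i⟩
  have hc_nr : ∀ i : Fin (r - 1), c i ∉ p.roots := fun i hmem =>
    hc_ns i (Multiset.mem_toFinset.mpr hmem)
  have hcinj : Function.Injective c := by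
    have hsm : StrictMono c := by
      intro i j hij
      have h2 : l.get ⟨i.1 + 1, hil i⟩ ≤ l.get ⟨j.1, hil0 j⟩ :=
        hsort.strictMono_get.monotone (Fin.le_def.mpr (by simp; omega))
      have := hcr i
      have := hcl j
      linarith
    exact hsm.injective
  -- the extra root outside the root interval
  have hcstar : ∃ cs : ℝ, q.eval cs = 0 ∧ cs ∉ p.roots ∧ ∀ i : Fin (r - 1), cs ≠ c i := by
    have hget_mem_s : ∀ (k : Fin l.length), l.get k ∈ s := fun k => hmem_s _ (by exact l.get_mem k)
    rcases lt_or_gt_of_ne hε with hneg | hpos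
    · set a0 := s.min' hsne with ha0
      have ha0r : p.IsRoot a0 := isRoot_of_mem_roots (Multiset.mem_toFinset.mp (s.min'_mem hsne))
      have hmin : ∀ b, p.IsRoot b → a0 ≤ b := fun b hb =>
        s.min'_le b (Multiset.mem_toFinset.mpr ((mem_roots hp0).mpr hb))
      obtain ⟨cs, hcs1, hcs2⟩ := rolle_left ε hneg p ha0r hmin
      refine ⟨cs, hcs2, ?_, ?_⟩
      · intro hmem
        have := hmin cs (isRoot_of_mem_roots hmem); linarith
      · intro i heq
        have h1 : a0 ≤ l.get ⟨i.1, hil0 i⟩ := s.min'_le _ (hget_mem_s _)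
        have := hcl i
        rw [heq] at hcs1; linarith
    · set a0 := s.max' hsne with ha0
      have ha0r : p.IsRoot a0 := isRoot_of_mem_roots (Multiset.mem_toFinset.mp (s.max'_mem hsne))
      have hmax : ∀ b, p.IsRoot b → b ≤ a0 := fun b hb =>
        s.le_max' b (Multiset.mem_toFinset.mpr ((mem_roots hp0).mpr hb))
      obtain ⟨cs, hcs1, hcs2⟩ := rolle_right ε hpos p ha0r hmax
      refine ⟨cs, hcs2, ?_, ?_⟩
      · intro hmem
        have := hmax cs (isRoot_of_mem_roots hmem); linarith
      · intro i heq
        have h1 : l.get ⟨i.1 + 1, hil i⟩ ≤ a0 := s.le_max' _ (hget_mem_s _)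
        have := hcr i
        rw [heq] at hcs1; linarith
  obtain ⟨cs, hcsq, hcs_nr, hcs_nc⟩ := hcstar
  -- the multiset of known roots of q
  set T : Multiset ℝ := (p.roots - p.roots.dedup) + Multiset.map c Finset.univ.val + {cs}
    with hT
  have hdedupcard : Multiset.card p.roots.dedup = r := by
    rw [hrr, hs]; rfl
  have hcardT : Multiset.card T = n := by
    rw [hT]
    simp only [Multiset.card_add, Multiset.card_sub (Multiset.dedup_le _), Multiset.card_map,
      Multiset.card_singleton, hdedupcard, hr]
    have : Multiset.card (Finset.univ.val : Multiset (Fin (r - 1))) = r - 1 := by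
      simp
    rw [this]; omega
  have hkey : ∀ a : ℝ, Multiset.count a T ≤ q.rootMultiplicity a ∧
      Multiset.count a T ≤ max 1 (p.rootMultiplicity a - 1) := by
    intro a
    have hTcount : Multiset.count a T = (Multiset.count a p.roots - Multiset.count a p.roots.dedup)
        + Multiset.count a (Multiset.map c Finset.univ.val) + Multiset.count a ({cs} : Multiset ℝ) := by
      rw [hT]
      simp [Multiset.count_sub]
    by_cases hmem : a ∈ p.roots
    · have hmult : 1 ≤ p.rootMultiplicity a :=
        (rootMultiplicity_pos hp0).mpr (isRoot_of_mem_roots hmem)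
      have h1 : Multiset.count a p.roots - Multiset.count a p.roots.dedup
          = p.rootMultiplicity a - 1 := by
        rw [Multiset.count_dedup, if_pos hmem, count_roots]
      have h2 : Multiset.count a (Multiset.map c Finset.univ.val) = 0 := by
        rw [Multiset.count_eq_zero]
        intro hcon
        obtain ⟨i, _, hi⟩ := Multiset.mem_map.mp hcon
        exact hc_nr i (hi ▸ hmem)
      have h3 : Multiset.count a ({cs} : Multiset ℝ) = 0 := by
        rw [Multiset.count_singleton, if_neg]
        intro hcon; exact hcs_nr (hcon ▸ hmem)
      have hdrop := mult_drop ε hε p hp0 a hq0 hmult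
      rw [hTcount, h1, h2, h3]
      constructor
      · rw [hdrop]; omega
      · omega
    · have h1 : Multiset.count a p.roots = 0 := Multiset.count_eq_zero.mpr hmem
      have h1' : Multiset.count a p.roots - Multiset.count a p.roots.dedup = 0 := by omega
      by_cases hacs : a = cs
      · have h2 : Multiset.count a (Multiset.map c Finset.univ.val) = 0 := by
          rw [Multiset.count_eq_zero]
          intro hcon
          obtain ⟨i, _, hi⟩ := Multiset.mem_map.mp hcon
          exact hcs_nc i (by rw [← hacs, hi])
        have h3 : Multiset.count a ({cs} : Multiset ℝ) = 1 := by
          rw [Multiset.count_singleton, if_pos hacs]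
        have hroot : 1 ≤ q.rootMultiplicity a :=
          (rootMultiplicity_pos hq0).mpr (by rw [hacs]; exact hcsq)
        rw [hTcount, h1', h2, h3]
        exact ⟨by omega, by omega⟩
      · have h3 : Multiset.count a ({cs} : Multiset ℝ) = 0 := by
          rw [Multiset.count_singleton, if_neg hacs]
        by_cases hac : ∃ i : Fin (r - 1), c i = a
        · obtain ⟨i, hi⟩ := hac
          have hnodup : (Multiset.map c Finset.univ.val).Nodup :=
            Finset.univ.nodup.map hcinj
          have h2 : Multiset.count a (Multiset.map c Finset.univ.val) = 1 :=
            Multiset.count_eq_one_of_mem hnodup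
              (Multiset.mem_map.mpr ⟨i, Finset.mem_univ i, hi⟩)
          have hroot : 1 ≤ q.rootMultiplicity a :=
            (rootMultiplicity_pos hq0).mpr (by rw [← hi]; exact hcq i)
          rw [hTcount, h1', h2, h3]
          exact ⟨by omega, by omega⟩
        · have h2 : Multiset.count a (Multiset.map c Finset.univ.val) = 0 := by
            rw [Multiset.count_eq_zero]
            intro hcon
            obtain ⟨i, _, hi⟩ := Multiset.mem_map.mp hcon
            exact hac ⟨i, hi⟩
          rw [hTcount, h1', h2, h3]
          exact ⟨by omega, by omega⟩
  have hTle : T ≤ q.roots := by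
    rw [Multiset.le_iff_count]
    intro a
    rw [count_roots]
    exact (hkey a).1
  have hcard_le : Multiset.card q.roots ≤ n := hqd ▸ q.card_roots'
  have hcard_ge : n ≤ Multiset.card q.roots := by
    rw [← hcardT]; exact Multiset.card_le_card hTle
  have hTeq : T = q.roots := Multiset.eq_of_le_of_card_le hTle (by omega)
  refine ⟨hqm, hqd, by omega, fun a => ?_⟩
  have : q.rootMultiplicity a = Multiset.count a T := by rw [hTeq, count_roots]
  rw [this]
  exact (hkey a).2

lemma iterate_eq (ε : ℝ) (P : ℝ[X]) (m : ℕ) :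
    (fun p : ℝ[X] => p - C ε * derivative p)^[m] P
      = ∑ k ∈ Finset.range (m+1), C ((m.choose k : ℝ) * (-ε)^k) * derivative^[k] P := by
  induction m with
  | zero => simp
  | succ m ih =>
    rw [Function.iterate_succ_apply', ih]
    have hDS : derivative (∑ k ∈ Finset.range (m+1),
          C ((m.choose k : ℝ) * (-ε)^k) * derivative^[k] P)
        = ∑ k ∈ Finset.range (m+1), C ((m.choose k : ℝ) * (-ε)^k) * derivative^[k+1] P := by
      rw [derivative_sum]
      refine Finset.sum_congr rfl fun k _ => ?_
      rw [derivative_mul, derivative_C, zero_mul, zero_add,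
        ← Function.iterate_succ_apply' derivative]
    rw [hDS, Finset.mul_sum]
    have hc : ∀ k, C ε * (C ((m.choose k : ℝ) * (-ε)^k) * derivative^[k+1] P)
        = C (ε * ((m.choose k : ℝ) * (-ε)^k)) * derivative^[k+1] P := by
      intro k; rw [C_mul, C_mul, C_mul]; ring
    simp only [hc]
    rw [Finset.sum_range_succ' (fun k => C (((m+1).choose k : ℝ) * (-ε)^k) * derivative^[k] P)
      (m+1)]
    have h1 : ∑ k ∈ Finset.range (m+1), C ((m.choose k : ℝ) * (-ε)^k) * derivative^[k] P
        = C ((m.choose 0 : ℝ) * (-ε)^0) * derivative^[0] P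
          + ∑ k ∈ Finset.range (m+1),
              C ((m.choose (k+1) : ℝ) * (-ε)^(k+1)) * derivative^[k+1] P := by
      rw [Finset.sum_range_succ (fun k => C ((m.choose (k+1) : ℝ) * (-ε)^(k+1)) * derivative^[k+1] P) m]
      rw [Nat.choose_succ_self]
      push_cast
      rw [zero_mul, map_zero, zero_mul, add_zero]
      rw [Finset.sum_range_succ' (fun k => C ((m.choose k : ℝ) * (-ε)^k) * derivative^[k] P) m]
      ring
    rw [h1, add_sub_assoc, ← Finset.sum_sub_distrib]
    have h2 : ∀ k ∈ Finset.range (m+1),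
        C ((m.choose (k+1) : ℝ) * (-ε)^(k+1)) * derivative^[k+1] P
          - C (ε * ((m.choose k : ℝ) * (-ε)^k)) * derivative^[k+1] P
        = C ((((m+1).choose (k+1) : ℕ) : ℝ) * (-ε)^(k+1)) * derivative^[k+1] P := by
      intro k _
      rw [← sub_mul, ← map_sub]
      congr 2
      rw [Nat.choose_succ_succ]
      push_cast
      ring
    rw [Finset.sum_congr rfl h2, add_comm]
    congr 2
    norm_num
end Aux

/-- For a monic hyperbolic `P` of degree `n ≥ 2` and `ε ≠ 0`, the polynomial
`(1 - εD)^{n-1} P` is monic strictly hyperbolic of degree `n`; moreover these approximants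
converge to `P` uniformly on compact sets as `ε → 0`. -/
theorem strict_hyperbolic_approximation
    (n : ℕ) (hn : 2 ≤ n) (x : ℕ → ℝ) (P : Polynomial ℝ)
    (hP : P = ∏ i ∈ Finset.range n, (X - C (x i)))
    (Q : ℝ → Polynomial ℝ)
    (hQ : Q = fun ε => ∑ k ∈ Finset.range n,
      C ((((n - 1).choose k : ℕ) : ℝ) * (-ε) ^ k) * derivative^[k] P) :
    (∀ ε : ℝ, ε ≠ 0 → ∃ y : ℕ → ℝ,
      (∀ i, i + 1 < n → y i < y (i + 1)) ∧
      Q ε = ∏ i ∈ Finset.range n, (X - C (y i))) ∧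
    ∀ K : Set ℝ, IsCompact K →
      TendstoUniformlyOn (fun (ε : ℝ) (z : ℝ) => (Q ε).eval z)
        (fun z => P.eval z) (nhds 0) K := by
  classical
  have hPm : P.Monic := by
    rw [hP]; exact monic_prod_of_monic _ _ fun i _ => monic_X_sub_C _
  have hPd : P.natDegree = n := by
    rw [hP, natDegree_prod _ _ (fun i _ => X_sub_C_ne_zero _)]
    simp
  have hProots : Multiset.card P.roots = n := by
    have hform : P = ((Multiset.map x (Finset.range n).val).map fun a => X - C a).prod := by
      rw [hP, Multiset.map_map]
      rfl
    rw [hform, roots_multiset_prod_X_sub_C]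
    simp
  constructor
  · intro ε hε
    have hn1 : n - 1 + 1 = n := by omega
    have hQit : Q ε = (fun p : ℝ[X] => p - C ε * derivative p)^[n-1] P := by
      rw [hQ, iterate_eq, hn1]
    set L : ℝ[X] → ℝ[X] := fun p => p - C ε * derivative p with hL
    have inv : ∀ k : ℕ, (L^[k] P).Monic ∧ (L^[k] P).natDegree = n ∧
        Multiset.card (L^[k] P).roots = n ∧
        ∀ a, (L^[k] P).rootMultiplicity a ≤ max 1 (n - k) := by
      intro k
      induction k with
      | zero =>
        refine ⟨by simpa using hPm, by simpa using hPd, by simpa using hProots, fun a => ?_⟩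
        simp only [Function.iterate_zero, id_eq]
        have h1 : P.rootMultiplicity a = Multiset.count a P.roots := (count_roots P).symm
        have h2 : Multiset.count a P.roots ≤ Multiset.card P.roots := Multiset.count_le_card _ _
        omega
      | succ k ih =>
        obtain ⟨h1, h2, h3, h4⟩ := ih
        have hst := step_lemma ε hε (L^[k] P) h1 (by omega) (by rw [h2]; exact h3)
        rw [Function.iterate_succ_apply']
        refine ⟨hst.1, by rw [hst.2.1, h2], by rw [hst.2.2.1, h2], fun a => ?_⟩
        have h5 : rootMultiplicity a (L (L^[k] P))
            ≤ max 1 (rootMultiplicity a (L^[k] P) - 1) := hst.2.2.2 a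
        have h6 := h4 a
        omega
    obtain ⟨hqm, hqd, hqc, hqmult⟩ := inv (n-1)
    set q := L^[n-1] P with hqdef
    have hnodup : q.roots.Nodup := by
      rw [Multiset.nodup_iff_count_le_one]
      intro a
      rw [count_roots]
      have := hqmult a
      omega
    set Lst := q.roots.toFinset.sort (· ≤ ·) with hLst
    have hLlen : Lst.length = n := by
      rw [hLst, Finset.length_sort, Multiset.toFinset_card_eq_card_iff_nodup.mpr hnodup, hqc]
    have hLsort : Lst.SortedLT := Finset.sortedLT_sort _
    refine ⟨fun i => Lst.getD i 0, fun i hi => ?_, ?_⟩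
    · have h1 : i < Lst.length := by omega
      have h2 : i + 1 < Lst.length := by omega
      show Lst.getD i 0 < Lst.getD (i+1) 0
      rw [List.getD_eq_get _ _ ⟨i, h1⟩, List.getD_eq_get _ _ ⟨i + 1, h2⟩]
      exact hLsort.strictMono_get (by simp [Fin.lt_def])
    · rw [hQit]
      have hprod : (q.roots.map fun a => X - C a).prod = q :=
        prod_multiset_X_sub_C_of_monic_of_roots_card_eq hqm (by rw [hqc, hqd])
      have hroots_eq : q.roots = (Lst : Multiset ℝ) := by
        rw [hLst, Finset.sort_eq, Multiset.toFinset_val, Multiset.dedup_eq_self.mpr hnodup]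
      have hgoal : q = ∏ i ∈ Finset.range n, (X - C (Lst.getD i 0)) := by
        rw [← hprod, hroots_eq, Multiset.map_coe, Multiset.prod_coe]
        have hofn : Lst.map (fun a => X - C a)
            = List.ofFn (fun i : Fin n => X - C (Lst.getD i.1 0)) := by
          apply List.ext_get
          · simp [hLlen]
          · intro i h1 h2
            simp only [List.get_eq_getElem, List.getElem_map, List.getElem_ofFn]
            congr 2
            have hi : i < Lst.length := by simpa using h1
            rw [List.getD_eq_get _ _ ⟨i, by simpa [hLlen] using hi⟩]
            congr 1
        rw [hofn, List.prod_ofFn]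
        exact Fin.prod_univ_eq_prod_range (fun j => X - C (Lst.getD j 0)) n
      exact hgoal
  · intro K hK
    have hcont : ∀ k : ℕ, ∃ Mk : ℝ, ∀ z ∈ K, |(derivative^[k] P).eval z| ≤ Mk := by
      intro k
      obtain ⟨Mk, hMk⟩ := hK.exists_bound_of_continuousOn
        (Polynomial.continuous (derivative^[k] P)).continuousOn
      exact ⟨Mk, fun z hz => by simpa [Real.norm_eq_abs] using hMk z hz⟩
    choose M hM using hcont
    set CB := ∑ k ∈ Finset.Ico 1 n, ((((n-1).choose k : ℕ) : ℝ) * max (M k) 0) with hCB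
    have hCB0 : 0 ≤ CB := by
      apply Finset.sum_nonneg
      intro k _
      positivity
    have hsplit : ∀ (ε z : ℝ), (Q ε).eval z - P.eval z
        = ∑ k ∈ Finset.Ico 1 n,
            (((((n-1).choose k : ℕ) : ℝ) * (-ε)^k) * (derivative^[k] P).eval z) := by
      intro ε z
      rw [hQ]
      simp only [eval_finset_sum, eval_mul, eval_C]
      rw [Finset.range_eq_Ico, Finset.sum_eq_sum_Ico_succ_bot (by omega : 0 < n)]
      simp only [Nat.choose_zero_right, Nat.cast_one, pow_zero, mul_one, one_mul,
        Function.iterate_zero, id_eq]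
      ring
    have hbound : ∀ ε : ℝ, |ε| ≤ 1 → ∀ z ∈ K, |(Q ε).eval z - P.eval z| ≤ |ε| * CB := by
      intro ε hε1 z hz
      rw [hsplit]
      calc |∑ k ∈ Finset.Ico 1 n,
            (((((n-1).choose k : ℕ) : ℝ) * (-ε)^k) * (derivative^[k] P).eval z)|
          ≤ ∑ k ∈ Finset.Ico 1 n,
            |((((n-1).choose k : ℕ) : ℝ) * (-ε)^k) * (derivative^[k] P).eval z| :=
            Finset.abs_sum_le_sum_abs _ _
        _ ≤ ∑ k ∈ Finset.Ico 1 n, ((((n-1).choose k : ℕ) : ℝ) * max (M k) 0) * |ε| := by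
            apply Finset.sum_le_sum
            intro k hk
            have hk1 : 1 ≤ k := (Finset.mem_Ico.mp hk).1
            rw [abs_mul, abs_mul, abs_pow, abs_neg]
            have hb1 : |ε| ^ k ≤ |ε| := by
              calc |ε| ^ k ≤ |ε| ^ 1 := pow_le_pow_of_le_one (abs_nonneg _) hε1 hk1
                _ = |ε| := pow_one _
            have hb2 : |(derivative^[k] P).eval z| ≤ max (M k) 0 :=
              (hM k z hz).trans (le_max_left _ _)
            have hcn : (0:ℝ) ≤ (((n-1).choose k : ℕ) : ℝ) := Nat.cast_nonneg _
            have habs : |(((n-1).choose k : ℕ) : ℝ)| = (((n-1).choose k : ℕ) : ℝ) :=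
              abs_of_nonneg hcn
            rw [habs]
            calc (((n-1).choose k : ℕ) : ℝ) * |ε| ^ k * |(derivative^[k] P).eval z|
                ≤ (((n-1).choose k : ℕ) : ℝ) * |ε| * max (M k) 0 := by
                  apply mul_le_mul
                  · exact mul_le_mul_of_nonneg_left hb1 hcn
                  · exact hb2
                  · exact abs_nonneg _
                  · positivity
              _ = (((n-1).choose k : ℕ) : ℝ) * max (M k) 0 * |ε| := by ring
        _ = |ε| * CB := by
            rw [hCB, Finset.mul_sum]
            exact Finset.sum_congr rfl fun k _ => by ring
    rw [Metric.tendstoUniformlyOn_iff]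
    intro δ hδ
    have hpos : 0 < min 1 (δ / (CB + 1)) := by positivity
    filter_upwards [Metric.ball_mem_nhds (0:ℝ) hpos] with ε hεb
    intro z hz
    have hε' : |ε| < min 1 (δ / (CB + 1)) := by
      simpa [Real.dist_eq] using hεb
    have h1 : |ε| ≤ 1 := le_of_lt (lt_of_lt_of_le hε' (min_le_left _ _))
    have h2 := hbound ε h1 z hz
    rw [Real.dist_eq, abs_sub_comm]
    have h4 : |ε| < δ / (CB + 1) := lt_of_lt_of_le hε' (min_le_right _ _)
    have h5 : |ε| * (CB + 1) < δ := (lt_div_iff₀ (by linarith)).mp h4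
    have h6 : |ε| * CB ≤ |ε| * (CB + 1) := by nlinarith [abs_nonneg ε]
    linarith
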